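/- If a Bayesian auction is (λ,μ)-smooth with λ, μ ≥ 0 and the players' valuation distributions are independent, then every Bayes-Nash equilibrium σ has expected social welfare at least λ/(1+μ) times the optimal expected welfare: E_{v∼F} E_{a∼σ(v)}[SW(a; v)] ≥ (λ/(1+μ))·E_{v∼F}[OPT(v)]. -/

import Mathlib

set_option linter.unusedSectionVars false
open Finset

section Split
variable {n : ℕ} (T : Fin n → Type) [∀ j, Fintype (T j)] (i : Fin n)

def Smk (c : T i) (r : ∀ j : {j : Fin n // j ≠ i}, T j) : ∀ j, T j :=
  fun j => if h : j = i then h ▸ c else r ⟨j, h⟩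

variable {T i}

@[simp] lemma Smk_same (c : T i) (r) : Smk T i c r i = c := by simp [Smk]

lemma Smk_ne (c : T i) (r) (j : Fin n) (h : j ≠ i) : Smk T i c r j = r ⟨j, h⟩ := by
  simp [Smk, h]

lemma update_Smk (c c' : T i) (r) :
    Function.update (Smk T i c r) i c' = Smk T i c' r := by
  funext j
  by_cases h : j = i
  · subst h; simp
  · rw [Function.update_of_ne h, Smk_ne _ _ _ h, Smk_ne _ _ _ h]

variable (T i) in
def splitE : (∀ j, T j) ≃ T i × (∀ j : {j : Fin n // j ≠ i}, T j) where
  toFun t := (t i, fun j => t j)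
  invFun q := Smk T i q.1 q.2
  left_inv t := by
    funext j
    by_cases h : j = i
    · subst h; simp
    · show Smk T i (t i) (fun j => t j) j = t j
      rw [Smk_ne _ _ _ h]
  right_inv q := by
    refine Prod.ext (by simp) ?_
    funext j
    exact Smk_ne _ _ _ j.2

lemma sum_Smk (f : (∀ j, T j) → ℝ) :
    ∑ t, f t = ∑ c, ∑ r, f (Smk T i c r) := by
  rw [← Equiv.sum_comp (splitE T i).symm f, Fintype.sum_prod_type]
  rfl

lemma prod_Smk (g : ∀ j, T j → ℝ) (c : T i) (r) :
    ∏ j, g j (Smk T i c r j) = g i c * ∏ j : {j : Fin n // j ≠ i}, g j (r j) := by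
  rw [← Finset.mul_prod_erase univ _ (mem_univ i), Smk_same]
  congr 1
  rw [Finset.prod_subtype (univ.erase i) (p := fun j => j ≠ i)
    (fun j => by simp [Finset.mem_erase]) (fun j => g j (Smk T i c r j))]
  exact Finset.prod_congr rfl fun j _ => by rw [Smk_ne _ _ _ j.2]

end Split

section Engine
variable {n : ℕ} {T : Fin n → Type} [∀ j, Fintype (T j)] {i : Fin n}

lemma M1 (g : ∀ j, T j → ℝ) (h : (∀ j, T j) → ℝ) :
    ∑ t, (∏ j, g j (t j)) * h t
      = ∑ c, g i c * ∑ r, (∏ j : {j : Fin n // j ≠ i}, g j.1 (r j)) * h (Smk T i c r) := by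
  rw [sum_Smk (i := i)]
  refine Finset.sum_congr rfl fun c _ => ?_
  rw [Finset.mul_sum]
  refine Finset.sum_congr rfl fun r _ => ?_
  rw [prod_Smk, mul_assoc]

lemma M2 (g : ∀ j, T j → ℝ) (hg : ∑ x, g i x = 1) (c' : T i) (h : (∀ j, T j) → ℝ) :
    ∑ t, (∏ j, g j (t j)) * h (Function.update t i c')
      = ∑ r, (∏ j : {j : Fin n // j ≠ i}, g j.1 (r j)) * h (Smk T i c' r) := by
  rw [M1 (i := i) g (fun t => h (Function.update t i c'))]
  have : ∀ (c : T i) r, Function.update (Smk T i c r) i c' = Smk T i c' r :=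
    fun c r => update_Smk c c' r
  simp only [this]
  rw [← Finset.sum_mul, hg, one_mul]

lemma GRsum (g : ∀ j, T j → ℝ) (hg : ∀ j, ∑ x, g j x = 1) :
    ∑ r : ∀ j : {j : Fin n // j ≠ i}, T j.1, ∏ j, g j.1 (r j) = 1 := by
  classical
  rw [← Fintype.piFinset_univ, ← Finset.prod_univ_sum]
  simp [hg]

end Engine

lemma swap_mul {α β : Type*} [Fintype α] [Fintype β] (f : α → ℝ) (g : β → ℝ)
    (X : α → β → ℝ) :
    ∑ a, f a * ∑ b, g b * X a b = ∑ b, g b * ∑ a, f a * X a b := by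
  simp only [Finset.mul_sum]
  rw [Finset.sum_comm]
  exact Finset.sum_congr rfl fun b _ => Finset.sum_congr rfl fun a _ => by ring

section AuxMain
variable {n : ℕ} {V A : Fin n → Type} [∀ j, Fintype (V j)] [∀ j, Fintype (A j)]
  {i : Fin n} (F : ∀ j, V j → ℝ) (σ : ∀ j, V j → A j → ℝ)
  (u : (∀ j, A j) → V i → ℝ)

lemma eqW (hF1 : ∀ j, ∑ x, F j x = 1) :
    ∑ vi, F i vi * ∑ v : ∀ j, V j, (∏ j, F j (v j)) *
        ∑ a : ∀ j, A j, (∏ j, σ j (Function.update v i vi j) (a j)) * u a vi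
    = ∑ v : ∀ j, V j, (∏ j, F j (v j)) * ∑ a : ∀ j, A j, (∏ j, σ j (v j) (a j)) * u a (v i) := by
  have pS : ∀ (v : ∀ j, V j) (vi : V i) (s : ∀ j : {j : Fin n // j ≠ i}, A j.1),
      (∏ j : {j : Fin n // j ≠ i}, σ j.1 (Function.update v i vi j.1) (s j))
        = ∏ j : {j : Fin n // j ≠ i}, σ j.1 (v j.1) (s j) :=
    fun v vi s => Finset.prod_congr rfl fun j _ => by rw [Function.update_of_ne j.2]
  have pSm : ∀ (c : V i) (r : ∀ j : {j : Fin n // j ≠ i}, V j.1)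
      (s : ∀ j : {j : Fin n // j ≠ i}, A j.1),
      (∏ j : {j : Fin n // j ≠ i}, σ j.1 (Smk V i c r j.1) (s j))
        = ∏ j : {j : Fin n // j ≠ i}, σ j.1 (r j) (s j) :=
    fun c r s => Finset.prod_congr rfl fun j _ => by rw [Smk_ne _ _ _ j.2]
  have hA : ∀ (v : ∀ j, V j) (vi : V i),
      (∑ a : ∀ j, A j, (∏ j, σ j (Function.update v i vi j) (a j)) * u a vi)
        = ∑ ai : A i, σ i vi ai * ∑ s : ∀ j : {j : Fin n // j ≠ i}, A j.1, (∏ j : {j : Fin n // j ≠ i}, σ j.1 (v j.1) (s j)) *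
            u (Smk A i ai s) vi := by
    intro v vi
    rw [M1 (i := i) (fun j => σ j (Function.update v i vi j)) (fun a => u a vi)]
    simp only [Function.update_self, pS]
  have hA0 : ∀ v : ∀ j, V j,
      (∑ a : ∀ j, A j, (∏ j, σ j (v j) (a j)) * u a (v i))
        = ∑ ai : A i, σ i (v i) ai * ∑ s : ∀ j : {j : Fin n // j ≠ i}, A j.1, (∏ j : {j : Fin n // j ≠ i}, σ j.1 (v j.1) (s j)) *
            u (Smk A i ai s) (v i) :=
    fun v => M1 (i := i) (fun j => σ j (v j)) (fun a => u a (v i))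
  simp only [hA, hA0]
  have hVL : ∀ vi : V i,
      (∑ v : ∀ j, V j, (∏ j, F j (v j)) * ∑ ai : A i, σ i vi ai *
          ∑ s : ∀ j : {j : Fin n // j ≠ i}, A j.1, (∏ j : {j : Fin n // j ≠ i}, σ j.1 (v j.1) (s j)) * u (Smk A i ai s) vi)
      = ∑ r : ∀ j : {j : Fin n // j ≠ i}, V j.1, (∏ j : {j : Fin n // j ≠ i}, F j.1 (r j)) * ∑ ai : A i, σ i vi ai *
          ∑ s : ∀ j : {j : Fin n // j ≠ i}, A j.1, (∏ j : {j : Fin n // j ≠ i}, σ j.1 (r j) (s j)) * u (Smk A i ai s) vi := by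
    intro vi
    rw [M1 (i := i) F (fun v => ∑ ai : A i, σ i vi ai *
      ∑ s : ∀ j : {j : Fin n // j ≠ i}, A j.1, (∏ j : {j : Fin n // j ≠ i}, σ j.1 (v j.1) (s j)) * u (Smk A i ai s) vi)]
    simp only [pSm]
    rw [← Finset.sum_mul, hF1 i, one_mul]
  have hVR :
      (∑ v : ∀ j, V j, (∏ j, F j (v j)) * ∑ ai : A i, σ i (v i) ai *
          ∑ s : ∀ j : {j : Fin n // j ≠ i}, A j.1, (∏ j : {j : Fin n // j ≠ i}, σ j.1 (v j.1) (s j)) * u (Smk A i ai s) (v i))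
      = ∑ c : V i, F i c * ∑ r : ∀ j : {j : Fin n // j ≠ i}, V j.1, (∏ j : {j : Fin n // j ≠ i}, F j.1 (r j)) * ∑ ai : A i, σ i c ai *
          ∑ s : ∀ j : {j : Fin n // j ≠ i}, A j.1, (∏ j : {j : Fin n // j ≠ i}, σ j.1 (r j) (s j)) * u (Smk A i ai s) c := by
    rw [M1 (i := i) F (fun v => ∑ ai : A i, σ i (v i) ai *
      ∑ s : ∀ j : {j : Fin n // j ≠ i}, A j.1, (∏ j : {j : Fin n // j ≠ i}, σ j.1 (v j.1) (s j)) * u (Smk A i ai s) (v i))]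
    simp only [Smk_same, pSm]
  rw [hVR]
  simp only [hVL]

lemma pair_swap {α β : Type*} [Fintype α] [Fintype β]
    (G : α → ℝ) (Dq : α → β → ℝ) (X : β → ℝ) :
    ∑ r, G r * ∑ ai, Dq r ai * X ai = ∑ ai, (∑ r, G r * Dq r ai) * X ai := by
  simp only [Finset.mul_sum, Finset.sum_mul]
  rw [Finset.sum_comm]
  exact Finset.sum_congr rfl fun b _ => Finset.sum_congr rfl fun a _ => by ring

lemma eqGen (hF1 : ∀ j, ∑ x, F j x = 1) (hσ1i : ∀ vi : V i, ∑ ai, σ i vi ai = 1)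
    (q : V i → A i → ℝ) :
    ∑ vi : V i, F i vi * ∑ a'i : A i, q vi a'i *
        ∑ v : ∀ j, V j, (∏ j, F j (v j)) *
          ∑ a : ∀ j, A j, (∏ j, σ j (Function.update v i vi j) (a j)) *
            u (Function.update a i a'i) vi
    = ∑ vi : V i, F i vi * ∑ a'i : A i, q vi a'i *
        ∑ r : ∀ j : {j : Fin n // j ≠ i}, V j.1,
          (∏ j : {j : Fin n // j ≠ i}, F j.1 (r j)) *
          ∑ s : ∀ j : {j : Fin n // j ≠ i}, A j.1,
            (∏ j : {j : Fin n // j ≠ i}, σ j.1 (r j) (s j)) * u (Smk A i a'i s) vi := by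
  have pS : ∀ (v : ∀ j, V j) (vi : V i) (s : ∀ j : {j : Fin n // j ≠ i}, A j.1),
      (∏ j : {j : Fin n // j ≠ i}, σ j.1 (Function.update v i vi j.1) (s j))
        = ∏ j : {j : Fin n // j ≠ i}, σ j.1 (v j.1) (s j) :=
    fun v vi s => Finset.prod_congr rfl fun j _ => by rw [Function.update_of_ne j.2]
  have pSm : ∀ (c : V i) (r : ∀ j : {j : Fin n // j ≠ i}, V j.1)
      (s : ∀ j : {j : Fin n // j ≠ i}, A j.1),
      (∏ j : {j : Fin n // j ≠ i}, σ j.1 (Smk V i c r j.1) (s j))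
        = ∏ j : {j : Fin n // j ≠ i}, σ j.1 (r j) (s j) :=
    fun c r s => Finset.prod_congr rfl fun j _ => by rw [Smk_ne _ _ _ j.2]
  have hA : ∀ (v : ∀ j, V j) (vi : V i) (a'i : A i),
      (∑ a : ∀ j, A j, (∏ j, σ j (Function.update v i vi j) (a j)) *
          u (Function.update a i a'i) vi)
        = ∑ s : ∀ j : {j : Fin n // j ≠ i}, A j.1,
            (∏ j : {j : Fin n // j ≠ i}, σ j.1 (v j.1) (s j)) * u (Smk A i a'i s) vi := by
    intro v vi a'i
    rw [M2 (i := i) (fun j => σ j (Function.update v i vi j))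
      (by simp only [Function.update_self]; exact hσ1i vi) a'i (fun a => u a vi)]
    simp only [pS]
  simp only [hA]
  have hV : ∀ (vi : V i) (a'i : A i),
      (∑ v : ∀ j, V j, (∏ j, F j (v j)) *
          ∑ s : ∀ j : {j : Fin n // j ≠ i}, A j.1,
            (∏ j : {j : Fin n // j ≠ i}, σ j.1 (v j.1) (s j)) * u (Smk A i a'i s) vi)
        = ∑ r : ∀ j : {j : Fin n // j ≠ i}, V j.1,
            (∏ j : {j : Fin n // j ≠ i}, F j.1 (r j)) *
            ∑ s : ∀ j : {j : Fin n // j ≠ i}, A j.1,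
              (∏ j : {j : Fin n // j ≠ i}, σ j.1 (r j) (s j)) * u (Smk A i a'i s) vi := by
    intro vi a'i
    rw [M1 (i := i) F (fun v => ∑ s : ∀ j : {j : Fin n // j ≠ i}, A j.1,
      (∏ j : {j : Fin n // j ≠ i}, σ j.1 (v j.1) (s j)) * u (Smk A i a'i s) vi)]
    simp only [pSm]
    rw [← Finset.sum_mul, hF1 i, one_mul]
  simp only [hV]

lemma eqDevR (hF1 : ∀ j, ∑ x, F j x = 1) (hσ1 : ∀ j (x : V j), ∑ ai, σ j x ai = 1)
    (D : (∀ j, V j) → A i → ℝ) :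
    ∑ v : ∀ j, V j, (∏ j, F j (v j)) * ∑ w : ∀ j, V j, (∏ j, F j (w j)) *
        ∑ a : ∀ j, A j, (∏ j, σ j (w j) (a j)) *
          ∑ ai : A i, D v ai * u (Function.update a i ai) (v i)
    = ∑ vi : V i, F i vi * ∑ a'i : A i,
        (∑ w : ∀ j, V j, (∏ j, F j (w j)) * D (Function.update w i vi) a'i) *
        ∑ r : ∀ j : {j : Fin n // j ≠ i}, V j.1,
          (∏ j : {j : Fin n // j ≠ i}, F j.1 (r j)) *
          ∑ s : ∀ j : {j : Fin n // j ≠ i}, A j.1,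
            (∏ j : {j : Fin n // j ≠ i}, σ j.1 (r j) (s j)) * u (Smk A i a'i s) vi := by
  have pSm : ∀ (c : V i) (r : ∀ j : {j : Fin n // j ≠ i}, V j.1)
      (s : ∀ j : {j : Fin n // j ≠ i}, A j.1),
      (∏ j : {j : Fin n // j ≠ i}, σ j.1 (Smk V i c r j.1) (s j))
        = ∏ j : {j : Fin n // j ≠ i}, σ j.1 (r j) (s j) :=
    fun c r s => Finset.prod_congr rfl fun j _ => by rw [Smk_ne _ _ _ j.2]
  have hW : ∀ (vi : V i) (a'i : A i),
      (∑ w : ∀ j, V j, (∏ j, F j (w j)) * D (Function.update w i vi) a'i)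
        = ∑ r : ∀ j : {j : Fin n // j ≠ i}, V j.1,
            (∏ j : {j : Fin n // j ≠ i}, F j.1 (r j)) * D (Smk V i vi r) a'i :=
    fun vi a'i => M2 (i := i) F (hF1 i) vi (fun w => D w a'i)
  have h4 : ∀ (v w : ∀ j, V j),
      (∑ a : ∀ j, A j, (∏ j, σ j (w j) (a j)) *
          ∑ ai : A i, D v ai * u (Function.update a i ai) (v i))
        = ∑ ai : A i, D v ai * ∑ s : ∀ j : {j : Fin n // j ≠ i}, A j.1,
            (∏ j : {j : Fin n // j ≠ i}, σ j.1 (w j.1) (s j)) * u (Smk A i ai s) (v i) := by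
    intro v w
    rw [swap_mul (fun a : ∀ j, A j => ∏ j, σ j (w j) (a j)) (D v)
      (fun a ai => u (Function.update a i ai) (v i))]
    exact Finset.sum_congr rfl fun ai _ => by
      rw [M2 (i := i) (fun j => σ j (w j)) (hσ1 i (w i)) ai (fun a => u a (v i))]
  simp only [h4]
  have h6 : ∀ (v : ∀ j, V j),
      (∑ w : ∀ j, V j, (∏ j, F j (w j)) * ∑ ai : A i, D v ai *
          ∑ s : ∀ j : {j : Fin n // j ≠ i}, A j.1,
            (∏ j : {j : Fin n // j ≠ i}, σ j.1 (w j.1) (s j)) * u (Smk A i ai s) (v i))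
        = ∑ r' : ∀ j : {j : Fin n // j ≠ i}, V j.1,
            (∏ j : {j : Fin n // j ≠ i}, F j.1 (r' j)) * ∑ ai : A i, D v ai *
            ∑ s : ∀ j : {j : Fin n // j ≠ i}, A j.1,
              (∏ j : {j : Fin n // j ≠ i}, σ j.1 (r' j) (s j)) * u (Smk A i ai s) (v i) := by
    intro v
    rw [M1 (i := i) F (fun w => ∑ ai : A i, D v ai *
      ∑ s : ∀ j : {j : Fin n // j ≠ i}, A j.1,
        (∏ j : {j : Fin n // j ≠ i}, σ j.1 (w j.1) (s j)) * u (Smk A i ai s) (v i))]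
    simp only [pSm]
    rw [← Finset.sum_mul, hF1 i, one_mul]
  simp only [h6]
  rw [M1 (i := i) F (fun v => ∑ r' : ∀ j : {j : Fin n // j ≠ i}, V j.1,
    (∏ j : {j : Fin n // j ≠ i}, F j.1 (r' j)) * ∑ ai : A i, D v ai *
    ∑ s : ∀ j : {j : Fin n // j ≠ i}, A j.1,
      (∏ j : {j : Fin n // j ≠ i}, σ j.1 (r' j) (s j)) * u (Smk A i ai s) (v i))]
  simp only [Smk_same, hW]
  refine Finset.sum_congr rfl fun vi _ => ?_
  congr 1
  have hswap : ∀ r : ∀ j : {j : Fin n // j ≠ i}, V j.1,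
      (∑ r' : ∀ j : {j : Fin n // j ≠ i}, V j.1,
        (∏ j : {j : Fin n // j ≠ i}, F j.1 (r' j)) * ∑ ai : A i, D (Smk V i vi r) ai *
        ∑ s : ∀ j : {j : Fin n // j ≠ i}, A j.1,
          (∏ j : {j : Fin n // j ≠ i}, σ j.1 (r' j) (s j)) * u (Smk A i ai s) vi)
      = ∑ ai : A i, D (Smk V i vi r) ai *
          ∑ r' : ∀ j : {j : Fin n // j ≠ i}, V j.1,
            (∏ j : {j : Fin n // j ≠ i}, F j.1 (r' j)) *
            ∑ s : ∀ j : {j : Fin n // j ≠ i}, A j.1,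
              (∏ j : {j : Fin n // j ≠ i}, σ j.1 (r' j) (s j)) * u (Smk A i ai s) vi :=
    fun r => swap_mul _ _ _
  simp only [hswap]
  exact pair_swap _ _ _

lemma eqQR (hF1 : ∀ j, ∑ x, F j x = 1) (hσ1 : ∀ j (x : V j), ∑ ai, σ j x ai = 1) :
    ∑ v : ∀ j, V j, (∏ j, F j (v j)) * ∑ w : ∀ j, V j, (∏ j, F j (w j)) *
        ∑ a : ∀ j, A j, (∏ j, σ j (w j) (a j)) * u a (v i)
    = ∑ vi : V i, F i vi * ∑ a'i : A i, (∑ wi : V i, F i wi * σ i wi a'i) *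
        ∑ r : ∀ j : {j : Fin n // j ≠ i}, V j.1,
          (∏ j : {j : Fin n // j ≠ i}, F j.1 (r j)) *
          ∑ s : ∀ j : {j : Fin n // j ≠ i}, A j.1,
            (∏ j : {j : Fin n // j ≠ i}, σ j.1 (r j) (s j)) * u (Smk A i a'i s) vi := by
  have pSm : ∀ (c : V i) (r : ∀ j : {j : Fin n // j ≠ i}, V j.1)
      (s : ∀ j : {j : Fin n // j ≠ i}, A j.1),
      (∏ j : {j : Fin n // j ≠ i}, σ j.1 (Smk V i c r j.1) (s j))
        = ∏ j : {j : Fin n // j ≠ i}, σ j.1 (r j) (s j) :=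
    fun c r s => Finset.prod_congr rfl fun j _ => by rw [Smk_ne _ _ _ j.2]
  have hA0 : ∀ (v w : ∀ j, V j),
      (∑ a : ∀ j, A j, (∏ j, σ j (w j) (a j)) * u a (v i))
        = ∑ ai : A i, σ i (w i) ai * ∑ s : ∀ j : {j : Fin n // j ≠ i}, A j.1,
            (∏ j : {j : Fin n // j ≠ i}, σ j.1 (w j.1) (s j)) * u (Smk A i ai s) (v i) :=
    fun v w => M1 (i := i) (fun j => σ j (w j)) (fun a => u a (v i))
  simp only [hA0]
  have h6 : ∀ (v : ∀ j, V j),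
      (∑ w : ∀ j, V j, (∏ j, F j (w j)) * ∑ ai : A i, σ i (w i) ai *
          ∑ s : ∀ j : {j : Fin n // j ≠ i}, A j.1,
            (∏ j : {j : Fin n // j ≠ i}, σ j.1 (w j.1) (s j)) * u (Smk A i ai s) (v i))
        = ∑ wi : V i, F i wi *
            ∑ r' : ∀ j : {j : Fin n // j ≠ i}, V j.1,
              (∏ j : {j : Fin n // j ≠ i}, F j.1 (r' j)) * ∑ ai : A i, σ i wi ai *
              ∑ s : ∀ j : {j : Fin n // j ≠ i}, A j.1,
                (∏ j : {j : Fin n // j ≠ i}, σ j.1 (r' j) (s j)) * u (Smk A i ai s) (v i) := by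
    intro v
    rw [M1 (i := i) F (fun w => ∑ ai : A i, σ i (w i) ai *
      ∑ s : ∀ j : {j : Fin n // j ≠ i}, A j.1,
        (∏ j : {j : Fin n // j ≠ i}, σ j.1 (w j.1) (s j)) * u (Smk A i ai s) (v i))]
    simp only [Smk_same, pSm]
  simp only [h6]
  rw [M1 (i := i) F (fun v => ∑ wi : V i, F i wi *
    ∑ r' : ∀ j : {j : Fin n // j ≠ i}, V j.1,
      (∏ j : {j : Fin n // j ≠ i}, F j.1 (r' j)) * ∑ ai : A i, σ i wi ai *
      ∑ s : ∀ j : {j : Fin n // j ≠ i}, A j.1,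
        (∏ j : {j : Fin n // j ≠ i}, σ j.1 (r' j) (s j)) * u (Smk A i ai s) (v i))]
  simp only [Smk_same]
  refine Finset.sum_congr rfl fun vi _ => ?_
  congr 1
  rw [← Finset.sum_mul, GRsum (i := i) F hF1, one_mul]
  have hswap : ∀ wi : V i,
      (∑ r' : ∀ j : {j : Fin n // j ≠ i}, V j.1,
        (∏ j : {j : Fin n // j ≠ i}, F j.1 (r' j)) * ∑ ai : A i, σ i wi ai *
        ∑ s : ∀ j : {j : Fin n // j ≠ i}, A j.1,
          (∏ j : {j : Fin n // j ≠ i}, σ j.1 (r' j) (s j)) * u (Smk A i ai s) vi)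
      = ∑ ai : A i, σ i wi ai *
          ∑ r' : ∀ j : {j : Fin n // j ≠ i}, V j.1,
            (∏ j : {j : Fin n // j ≠ i}, F j.1 (r' j)) *
            ∑ s : ∀ j : {j : Fin n // j ≠ i}, A j.1,
              (∏ j : {j : Fin n // j ≠ i}, σ j.1 (r' j) (s j)) * u (Smk A i ai s) vi :=
    fun wi => swap_mul _ _ _
  simp only [hswap]
  exact pair_swap _ _ _

end AuxMain

lemma sum_pull {α ι : Type*} [Fintype α] [Fintype ι] (f : α → ℝ) (G : ι → α → ℝ) :
    ∑ a, f a * ∑ k, G k a = ∑ k, ∑ a, f a * G k a := by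
  simp only [Finset.mul_sum]; exact Finset.sum_comm

theorem bayesian_smooth_auction_poa
    (n : ℕ) (A V : Fin n → Type)
    [∀ i, Fintype (A i)] [∀ i, Nonempty (A i)]
    [∀ i, Fintype (V i)] [∀ i, Nonempty (V i)]
    (F : ∀ i, V i → ℝ) (hF0 : ∀ i vi, 0 ≤ F i vi) (hF1 : ∀ i, ∑ vi, F i vi = 1)
    (u : ∀ i : Fin n, (∀ j, A j) → V i → ℝ)
    (p : ∀ _ : Fin n, (∀ j, A j) → ℝ) (hp : ∀ i a, 0 ≤ p i a)
    (lam mu : ℝ) (hlam : 0 ≤ lam) (hmu : 0 ≤ mu)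
    (SW : (∀ j, A j) → (∀ j, V j) → ℝ)
    (hSW : ∀ a v, SW a v = (∑ i, u i a (v i)) + ∑ i, p i a)
    (OPT : (∀ j, V j) → ℝ)
    (hOPT : ∀ v, OPT v =
      Finset.univ.sup' Finset.univ_nonempty (fun a : ∀ j, A j => SW a v))
    (hsmooth : ∀ v : ∀ j, V j, ∃ D : ∀ i, A i → ℝ,
      (∀ i ai, 0 ≤ D i ai) ∧ (∀ i, ∑ ai, D i ai = 1) ∧
      ∀ a : ∀ j, A j,
        ∑ i, ∑ ai, D i ai * u i (Function.update a i ai) (v i) ≥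
          lam * OPT v - mu * SW a v)
    (σ : ∀ i, V i → A i → ℝ)
    (hσ0 : ∀ i vi ai, 0 ≤ σ i vi ai) (hσ1 : ∀ i vi, ∑ ai, σ i vi ai = 1)
    (hBNE : ∀ (i : Fin n) (vi : V i) (a'i : A i),
      ∑ v : ∀ j, V j, (∏ j, F j (v j)) *
          ∑ a : ∀ j, A j, (∏ j, σ j (Function.update v i vi j) (a j)) * u i a vi ≥
        ∑ v : ∀ j, V j, (∏ j, F j (v j)) *
          ∑ a : ∀ j, A j, (∏ j, σ j (Function.update v i vi j) (a j)) *
            u i (Function.update a i a'i) vi) :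
    ∑ v : ∀ j, V j, (∏ j, F j (v j)) *
        ∑ a : ∀ j, A j, (∏ j, σ j (v j) (a j)) * SW a v ≥
      (lam / (1 + mu)) * ∑ v : ∀ j, V j, (∏ j, F j (v j)) * OPT v := by
  classical
  choose D hD0 hD1 hDineq using hsmooth
  have hFv0 : ∀ v : ∀ j, V j, 0 ≤ ∏ j, F j (v j) :=
    fun v => Finset.prod_nonneg fun j _ => hF0 j (v j)
  have hSv0 : ∀ (w : ∀ j, V j) (a : ∀ j, A j), 0 ≤ ∏ j, σ j (w j) (a j) :=
    fun w a => Finset.prod_nonneg fun j _ => hσ0 j (w j) (a j)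
  have hFv1 : ∑ v : ∀ j, V j, ∏ j, F j (v j) = 1 := by
    rw [← Fintype.piFinset_univ, ← Finset.prod_univ_sum]; simp [hF1]
  have hSv1 : ∀ w : ∀ j, V j, ∑ a : ∀ j, A j, ∏ j, σ j (w j) (a j) = 1 := by
    intro w; rw [← Fintype.piFinset_univ, ← Finset.prod_univ_sum]; simp [hσ1]
  -- pull a sum over players out of the nested expectation
  have swapk : ∀ (G : Fin n → (∀ j, A j) → (∀ j, V j) → ℝ),
      (∑ v : ∀ j, V j, (∏ j, F j (v j)) *
          ∑ a : ∀ j, A j, (∏ j, σ j (v j) (a j)) * ∑ k, G k a v)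
      = ∑ k, ∑ v : ∀ j, V j, (∏ j, F j (v j)) *
          ∑ a : ∀ j, A j, (∏ j, σ j (v j) (a j)) * G k a v := by
    intro G
    have h1 : ∀ v : ∀ j, V j,
        (∑ a : ∀ j, A j, (∏ j, σ j (v j) (a j)) * ∑ k, G k a v)
        = ∑ k, ∑ a : ∀ j, A j, (∏ j, σ j (v j) (a j)) * G k a v :=
      fun v => sum_pull _ _
    simp only [h1]
    exact sum_pull _ _
  have swapk2 : ∀ (G : Fin n → (∀ j, A j) → (∀ j, V j) → ℝ),
      (∑ v : ∀ j, V j, (∏ j, F j (v j)) * ∑ w : ∀ j, V j, (∏ j, F j (w j)) *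
          ∑ a : ∀ j, A j, (∏ j, σ j (w j) (a j)) * ∑ k, G k a v)
      = ∑ k, ∑ v : ∀ j, V j, (∏ j, F j (v j)) * ∑ w : ∀ j, V j, (∏ j, F j (w j)) *
          ∑ a : ∀ j, A j, (∏ j, σ j (w j) (a j)) * G k a v := by
    intro G
    have h1 : ∀ (v w : ∀ j, V j),
        (∑ a : ∀ j, A j, (∏ j, σ j (w j) (a j)) * ∑ k, G k a v)
        = ∑ k, ∑ a : ∀ j, A j, (∏ j, σ j (w j) (a j)) * G k a v :=
      fun v w => sum_pull _ _
    simp only [h1]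
    have h2 : ∀ v : ∀ j, V j,
        (∑ w : ∀ j, V j, (∏ j, F j (w j)) *
            ∑ k, ∑ a : ∀ j, A j, (∏ j, σ j (w j) (a j)) * G k a v)
        = ∑ k, ∑ w : ∀ j, V j, (∏ j, F j (w j)) *
            ∑ a : ∀ j, A j, (∏ j, σ j (w j) (a j)) * G k a v :=
      fun v => sum_pull _ _
    simp only [h2]
    exact sum_pull _ _
  -- the generic BNE averaging inequality
  have stepIneq : ∀ (k : Fin n) (q : V k → A k → ℝ),
      (∀ vk ak, 0 ≤ q vk ak) → (∀ vk, ∑ ak, q vk ak = 1) →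
      (∑ vk : V k, F k vk * ∑ a'k : A k, q vk a'k *
          ∑ v : ∀ j, V j, (∏ j, F j (v j)) *
            ∑ a : ∀ j, A j, (∏ j, σ j (Function.update v k vk j) (a j)) *
              u k (Function.update a k a'k) vk)
      ≤ ∑ vk : V k, F k vk * ∑ v : ∀ j, V j, (∏ j, F j (v j)) *
          ∑ a : ∀ j, A j, (∏ j, σ j (Function.update v k vk j) (a j)) * u k a vk := by
    intro k q hq0 hq1
    refine Finset.sum_le_sum fun vk _ => mul_le_mul_of_nonneg_left ?_ (hF0 k vk)
    calc ∑ a'k : A k, q vk a'k *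
            ∑ v : ∀ j, V j, (∏ j, F j (v j)) *
              ∑ a : ∀ j, A j, (∏ j, σ j (Function.update v k vk j) (a j)) *
                u k (Function.update a k a'k) vk
        ≤ ∑ a'k : A k, q vk a'k *
            ∑ v : ∀ j, V j, (∏ j, F j (v j)) *
              ∑ a : ∀ j, A j, (∏ j, σ j (Function.update v k vk j) (a j)) * u k a vk :=
          Finset.sum_le_sum fun a'k _ =>
            mul_le_mul_of_nonneg_left (hBNE k vk a'k) (hq0 vk a'k)
      _ = ∑ v : ∀ j, V j, (∏ j, F j (v j)) *
              ∑ a : ∀ j, A j, (∏ j, σ j (Function.update v k vk j) (a j)) * u k a vk := by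
          rw [← Finset.sum_mul, hq1 vk, one_mul]
  -- Step A : deviation to the smoothness distribution
  have stepA : ∀ k : Fin n,
      (∑ v : ∀ j, V j, (∏ j, F j (v j)) * ∑ w : ∀ j, V j, (∏ j, F j (w j)) *
          ∑ a : ∀ j, A j, (∏ j, σ j (w j) (a j)) *
            ∑ ak : A k, D v k ak * u k (Function.update a k ak) (v k))
      ≤ ∑ v : ∀ j, V j, (∏ j, F j (v j)) *
          ∑ a : ∀ j, A j, (∏ j, σ j (v j) (a j)) * u k a (v k) := by
    intro k
    rw [eqDevR F σ (u k) hF1 hσ1 (fun v => D v k),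
      ← eqGen F σ (u k) hF1 (hσ1 k)
        (fun vk a'k => ∑ w : ∀ j, V j, (∏ j, F j (w j)) * D (Function.update w k vk) k a'k),
      ← eqW F σ (u k) hF1]
    refine stepIneq k _ ?_ ?_
    · exact fun vk ak => Finset.sum_nonneg fun w _ =>
        mul_nonneg (hFv0 w) (hD0 (Function.update w k vk) k ak)
    · intro vk
      calc ∑ a'k : A k, ∑ w : ∀ j, V j, (∏ j, F j (w j)) * D (Function.update w k vk) k a'k
          = ∑ w : ∀ j, V j, ∑ a'k : A k, (∏ j, F j (w j)) * D (Function.update w k vk) k a'k :=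
            Finset.sum_comm
        _ = ∑ w : ∀ j, V j, (∏ j, F j (w j)) *
              ∑ a'k : A k, D (Function.update w k vk) k a'k :=
            Finset.sum_congr rfl fun w _ => (Finset.mul_sum _ _ _).symm
        _ = 1 := by simp only [hD1, mul_one]; exact hFv1
  -- Step B : deviation to an independent resample of one's own strategy
  have stepB : ∀ k : Fin n,
      (∑ v : ∀ j, V j, (∏ j, F j (v j)) * ∑ w : ∀ j, V j, (∏ j, F j (w j)) *
          ∑ a : ∀ j, A j, (∏ j, σ j (w j) (a j)) * u k a (v k))
      ≤ ∑ v : ∀ j, V j, (∏ j, F j (v j)) *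
          ∑ a : ∀ j, A j, (∏ j, σ j (v j) (a j)) * u k a (v k) := by
    intro k
    rw [eqQR F σ (u k) hF1 hσ1,
      ← eqGen F σ (u k) hF1 (hσ1 k) (fun vk a'k => ∑ wk : V k, F k wk * σ k wk a'k),
      ← eqW F σ (u k) hF1]
    refine stepIneq k _ ?_ ?_
    · exact fun vk ak => Finset.sum_nonneg fun wk _ =>
        mul_nonneg (hF0 k wk) (hσ0 k wk ak)
    · intro vk
      calc ∑ a'k : A k, ∑ wk : V k, F k wk * σ k wk a'k
          = ∑ wk : V k, ∑ a'k : A k, F k wk * σ k wk a'k := Finset.sum_comm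
        _ = ∑ wk : V k, F k wk * ∑ a'k : A k, σ k wk a'k :=
            Finset.sum_congr rfl fun wk _ => (Finset.mul_sum _ _ _).symm
        _ = 1 := by simp only [hσ1, mul_one]; exact hF1 k
  -- smoothness, in expectation
  have hY : lam * (∑ v : ∀ j, V j, (∏ j, F j (v j)) * OPT v) -
        mu * (∑ v : ∀ j, V j, (∏ j, F j (v j)) * ∑ w : ∀ j, V j, (∏ j, F j (w j)) *
          ∑ a : ∀ j, A j, (∏ j, σ j (w j) (a j)) * SW a v)
      ≤ ∑ k, ∑ v : ∀ j, V j, (∏ j, F j (v j)) * ∑ w : ∀ j, V j, (∏ j, F j (w j)) *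
          ∑ a : ∀ j, A j, (∏ j, σ j (w j) (a j)) *
            ∑ ak : A k, D v k ak * u k (Function.update a k ak) (v k) := by
    rw [← swapk2 (fun k a v => ∑ ak : A k, D v k ak * u k (Function.update a k ak) (v k))]
    have e1 : ∀ (v w : ∀ j, V j),
        (∑ a : ∀ j, A j, (∏ j, σ j (w j) (a j)) * (lam * OPT v - mu * SW a v))
        = lam * OPT v - mu * ∑ a : ∀ j, A j, (∏ j, σ j (w j) (a j)) * SW a v := by
      intro v w
      calc ∑ a : ∀ j, A j, (∏ j, σ j (w j) (a j)) * (lam * OPT v - mu * SW a v)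
          = ∑ a : ∀ j, A j, ((∏ j, σ j (w j) (a j)) * (lam * OPT v) -
              mu * ((∏ j, σ j (w j) (a j)) * SW a v)) :=
            Finset.sum_congr rfl fun a _ => by ring
        _ = (∑ a : ∀ j, A j, (∏ j, σ j (w j) (a j)) * (lam * OPT v)) -
              ∑ a : ∀ j, A j, mu * ((∏ j, σ j (w j) (a j)) * SW a v) :=
            Finset.sum_sub_distrib _ _
        _ = lam * OPT v - mu * ∑ a : ∀ j, A j, (∏ j, σ j (w j) (a j)) * SW a v := by
            rw [← Finset.sum_mul, hSv1 w, one_mul, ← Finset.mul_sum]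
    have e2 : ∀ v : ∀ j, V j,
        (∑ w : ∀ j, V j, (∏ j, F j (w j)) *
            (lam * OPT v - mu * ∑ a : ∀ j, A j, (∏ j, σ j (w j) (a j)) * SW a v))
        = lam * OPT v - mu * ∑ w : ∀ j, V j, (∏ j, F j (w j)) *
            ∑ a : ∀ j, A j, (∏ j, σ j (w j) (a j)) * SW a v := by
      intro v
      calc ∑ w : ∀ j, V j, (∏ j, F j (w j)) *
              (lam * OPT v - mu * ∑ a : ∀ j, A j, (∏ j, σ j (w j) (a j)) * SW a v)
          = ∑ w : ∀ j, V j, ((∏ j, F j (w j)) * (lam * OPT v) -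
              mu * ((∏ j, F j (w j)) * ∑ a : ∀ j, A j, (∏ j, σ j (w j) (a j)) * SW a v)) :=
            Finset.sum_congr rfl fun w _ => by ring
        _ = (∑ w : ∀ j, V j, (∏ j, F j (w j)) * (lam * OPT v)) -
              ∑ w : ∀ j, V j, mu * ((∏ j, F j (w j)) *
                ∑ a : ∀ j, A j, (∏ j, σ j (w j) (a j)) * SW a v) :=
            Finset.sum_sub_distrib _ _
        _ = lam * OPT v - mu * ∑ w : ∀ j, V j, (∏ j, F j (w j)) *
              ∑ a : ∀ j, A j, (∏ j, σ j (w j) (a j)) * SW a v := by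
            rw [← Finset.sum_mul, hFv1, one_mul, ← Finset.mul_sum]
    have chain : (∑ v : ∀ j, V j, (∏ j, F j (v j)) * ∑ w : ∀ j, V j, (∏ j, F j (w j)) *
            ∑ a : ∀ j, A j, (∏ j, σ j (w j) (a j)) * (lam * OPT v - mu * SW a v))
        = lam * (∑ v : ∀ j, V j, (∏ j, F j (v j)) * OPT v) -
            mu * (∑ v : ∀ j, V j, (∏ j, F j (v j)) * ∑ w : ∀ j, V j, (∏ j, F j (w j)) *
              ∑ a : ∀ j, A j, (∏ j, σ j (w j) (a j)) * SW a v) := by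
      simp only [e1, e2]
      calc ∑ v : ∀ j, V j, (∏ j, F j (v j)) *
              (lam * OPT v - mu * ∑ w : ∀ j, V j, (∏ j, F j (w j)) *
                ∑ a : ∀ j, A j, (∏ j, σ j (w j) (a j)) * SW a v)
          = ∑ v : ∀ j, V j, (lam * ((∏ j, F j (v j)) * OPT v) -
              mu * ((∏ j, F j (v j)) * ∑ w : ∀ j, V j, (∏ j, F j (w j)) *
                ∑ a : ∀ j, A j, (∏ j, σ j (w j) (a j)) * SW a v)) :=
            Finset.sum_congr rfl fun v _ => by ring
        _ = _ := by
            rw [Finset.sum_sub_distrib, ← Finset.mul_sum, ← Finset.mul_sum]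
    rw [← chain]
    refine Finset.sum_le_sum fun v _ => mul_le_mul_of_nonneg_left ?_ (hFv0 v)
    refine Finset.sum_le_sum fun w _ => mul_le_mul_of_nonneg_left ?_ (hFv0 w)
    refine Finset.sum_le_sum fun a _ => mul_le_mul_of_nonneg_left ?_ (hSv0 w a)
    exact hDineq v a
  -- decomposition of the equilibrium welfare
  have hGoal : (∑ v : ∀ j, V j, (∏ j, F j (v j)) *
        ∑ a : ∀ j, A j, (∏ j, σ j (v j) (a j)) * SW a v)
      = (∑ k, ∑ v : ∀ j, V j, (∏ j, F j (v j)) *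
          ∑ a : ∀ j, A j, (∏ j, σ j (v j) (a j)) * u k a (v k)) +
        (∑ v : ∀ j, V j, (∏ j, F j (v j)) *
          ∑ a : ∀ j, A j, (∏ j, σ j (v j) (a j)) * ∑ k, p k a) := by
    simp only [hSW, mul_add, Finset.sum_add_distrib]
    rw [swapk (fun k a v => u k a (v k))]
  -- decomposition of the decoupled welfare
  have hXeq : (∑ v : ∀ j, V j, (∏ j, F j (v j)) * ∑ w : ∀ j, V j, (∏ j, F j (w j)) *
        ∑ a : ∀ j, A j, (∏ j, σ j (w j) (a j)) * SW a v)
      = (∑ k, ∑ v : ∀ j, V j, (∏ j, F j (v j)) * ∑ w : ∀ j, V j, (∏ j, F j (w j)) *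
          ∑ a : ∀ j, A j, (∏ j, σ j (w j) (a j)) * u k a (v k)) +
        (∑ v : ∀ j, V j, (∏ j, F j (v j)) *
          ∑ a : ∀ j, A j, (∏ j, σ j (v j) (a j)) * ∑ k, p k a) := by
    simp only [hSW, mul_add, Finset.sum_add_distrib]
    rw [swapk2 (fun k a v => u k a (v k))]
    congr 1
    rw [← Finset.sum_mul, hFv1, one_mul]
  have hPp : 0 ≤ ∑ v : ∀ j, V j, (∏ j, F j (v j)) *
      ∑ a : ∀ j, A j, (∏ j, σ j (v j) (a j)) * ∑ k, p k a :=
    Finset.sum_nonneg fun v _ => mul_nonneg (hFv0 v) (Finset.sum_nonneg fun a _ =>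
      mul_nonneg (hSv0 v a) (Finset.sum_nonneg fun k _ => hp k a))
  have hAsum := Finset.sum_le_sum (fun k _ => stepA k) (s := (univ : Finset (Fin n)))
  have hBsum := Finset.sum_le_sum (fun k _ => stepB k) (s := (univ : Finset (Fin n)))
  have hXle : (∑ v : ∀ j, V j, (∏ j, F j (v j)) * ∑ w : ∀ j, V j, (∏ j, F j (w j)) *
        ∑ a : ∀ j, A j, (∏ j, σ j (w j) (a j)) * SW a v)
      ≤ ∑ v : ∀ j, V j, (∏ j, F j (v j)) *
        ∑ a : ∀ j, A j, (∏ j, σ j (v j) (a j)) * SW a v := by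
    rw [hXeq, hGoal]
    exact add_le_add hBsum le_rfl
  have hmuX := mul_le_mul_of_nonneg_left hXle hmu
  rw [ge_iff_le, div_mul_eq_mul_div, div_le_iff₀ (show (0:ℝ) < 1 + mu by linarith)]
  linarith [hY, hAsum, hGoal, hPp, hmuX]
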